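/- For every integer n ≥ 2, the maximum, over all trees T on n vertices with maximum degree at most 3, of the number of 3-vertex subtrees of T equals ⌊(3n−6)/2⌋; moreover, every tree on n vertices with maximum degree at most 3 having exactly ⌊(n−2)/2⌋ vertices of degree 3 attains this maximum. -/

import Mathlib

/-- The number of `k`-vertex subtrees of a graph on `Fin n`, i.e. the number of
`k`-element vertex sets whose induced subgraph is connected. -/
noncomputable def subtreeCount {n : ℕ} (G : SimpleGraph (Fin n)) (k : ℕ) : ℕ :=
  {S : Finset (Fin n) | S.card = k ∧ (G.induce (S : Set (Fin n))).Connected}.ncard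

/-- `G` is a tree (connected and acyclic) with maximum degree at most 3. -/
def IsTreeMaxDeg3 {n : ℕ} (G : SimpleGraph (Fin n)) : Prop :=
  G.Connected ∧ G.IsAcyclic ∧ ∀ v, (G.neighborSet v).ncard ≤ 3

/-- The maximum number of `k`-vertex subtrees over all trees on `n`
vertices with maximum degree at most 3. -/
noncomputable def maxSubtrees (n k : ℕ) : ℕ :=
  sSup {m | ∃ G : SimpleGraph (Fin n), IsTreeMaxDeg3 G ∧ subtreeCount G k = m}


open SimpleGraph Finset

lemma acyclic_no_triangle {V : Type*} {G : SimpleGraph V} (hG : G.IsAcyclic)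
    {a b c : V} (hab : G.Adj a b) (hbc : G.Adj b c) (hca : G.Adj c a) : False := by
  have hc : (Walk.cons hab (Walk.cons hbc (Walk.cons hca Walk.nil))).IsCycle := by
    simp [Walk.isCycle_def, Walk.isTrail_def, hab.ne, hbc.ne, hca.ne, hab.ne', hbc.ne', hca.ne',
      Sym2.eq_iff]

  exact hG _ hc

variable {V : Type*} [DecidableEq V]

lemma reach_aux {G : SimpleGraph V} {S : Finset V} (hS : S.card = 3)
    {x y : V} (hx : x ∈ S) (hy : y ∈ S) (hxy : x ≠ y)
    (h : (G.induce (S : Set V)).Reachable ⟨x, hx⟩ ⟨y, hy⟩) :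
    G.Adj x y ∨ ∃ z ∈ S, z ≠ x ∧ z ≠ y ∧ G.Adj x z ∧ G.Adj z y := by
  obtain ⟨w⟩ := h
  have hp := w.toPath.2
  set p : (G.induce (S : Set V)).Walk ⟨x, hx⟩ ⟨y, hy⟩ := w.toPath.1 with hpdef
  clear_value p
  have hlen : p.support.length ≤ 3 := by
    have hnd : p.support.Nodup := hp.support_nodup
    have : (p.support.map Subtype.val).toFinset ⊆ S := by
      intro t ht
      simp only [List.mem_toFinset, List.mem_map] at ht
      obtain ⟨u, -, rfl⟩ := ht
      exact u.2
    have hnd' : (p.support.map Subtype.val).Nodup := hnd.map Subtype.val_injective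
    have := Finset.card_le_card this
    rwa [List.toFinset_card_of_nodup hnd', List.length_map, hS] at this
  match p, hp, hlen with
  | .nil, _, _ => exact absurd rfl hxy
  | .cons h .nil, _, _ =>
      left
      simpa using h
  | .cons (v := m) h₁ (.cons h₂ .nil), hp, _ =>
      right
      refine ⟨m.1, m.2, ?_, ?_, by simpa using h₁, by simpa using h₂⟩
      · have := hp.support_nodup
        simp only [Walk.support_cons, Walk.support_nil, List.nodup_cons] at this
        intro hmx
        exact this.1 (by simp [← hmx])
      · have := hp.support_nodup
        simp only [Walk.support_cons, Walk.support_nil, List.nodup_cons] at this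
        intro hmy
        exact this.2.1 (by simp [← hmy])
  | .cons _ (.cons _ (.cons _ q)), _, hlen =>
      exfalso
      simp [Walk.support_cons] at hlen
      omega

lemma exists_center {G : SimpleGraph V} {S : Finset V} (hS : S.card = 3)
    (hconn : (G.induce (S : Set V)).Connected) :
    ∃ v ∈ S, ∃ a ∈ S, ∃ b ∈ S, a ≠ b ∧ G.Adj v a ∧ G.Adj v b := by
  obtain ⟨x, y, z, hxy, hxz, hyz, rfl⟩ := Finset.card_eq_three.mp hS
  have hx : x ∈ ({x, y, z} : Finset V) := by simp
  have hy : y ∈ ({x, y, z} : Finset V) := by simp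
  have hz : z ∈ ({x, y, z} : Finset V) := by simp
  have H := fun (a b : V) (ha : a ∈ ({x,y,z} : Finset V)) (hb : b ∈ ({x,y,z} : Finset V))
    (hab : a ≠ b) => reach_aux hS ha hb hab (hconn.preconnected ⟨a, ha⟩ ⟨b, hb⟩)
  rcases H x y hx hy hxy with hxy' | ⟨m, hm, hmx, hmy, h1, h2⟩
  · rcases H x z hx hz hxz with hxz' | ⟨m, hm, hmx, hmz, h1, h2⟩
    · exact ⟨x, hx, y, hy, z, hz, hyz, hxy', hxz'⟩
    · have : m = y := by
        simp only [Finset.mem_insert, Finset.mem_singleton] at hm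
        tauto
      subst this
      exact ⟨m, hm, x, hx, z, hz, hxz, hxy'.symm, h2⟩
  · have : m = z := by
      simp only [Finset.mem_insert, Finset.mem_singleton] at hm
      tauto
    subst this
    exact ⟨m, hm, x, hx, y, hy, hxy, h1.symm, h2⟩

lemma center_connected {G : SimpleGraph V} {v a b : V}
    (hva : G.Adj v a) (hvb : G.Adj v b) (hab : a ≠ b) :
    (G.induce (({v, a, b} : Finset V) : Set V)).Connected := by
  set S : Finset V := {v, a, b} with hSdef
  have hv : v ∈ S := by simp [hSdef]
  haveI : Nonempty ((S : Set V)) := ⟨⟨v, hv⟩⟩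
  refine ⟨fun u w => ?_⟩
  have key : ∀ u : (S : Set V), (G.induce (S : Set V)).Reachable u ⟨v, hv⟩ := by
    rintro ⟨u, hu⟩
    have hu' : u = v ∨ u = a ∨ u = b := by simpa [hSdef] using hu
    rcases hu' with rfl | rfl | rfl
    · exact Reachable.refl _
    · exact Adj.reachable (by simpa using hva.symm)
    · exact Adj.reachable (by simpa using hvb.symm)
  exact (key u).trans (key w).symm

lemma count_eq_sum {n : ℕ} {G : SimpleGraph (Fin n)} (hac : G.IsAcyclic) :
    subtreeCount G 3 = ∑ v : Fin n, ((G.neighborSet v).ncard).choose 2 := by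
  classical
  have hdeg : ∀ v, (G.neighborSet v).ncard = G.degree v := by
    intro v
    rw [Set.ncard_eq_toFinset_card']
    rfl
  have hset : {S : Finset (Fin n) | S.card = 3 ∧ (G.induce (S : Set (Fin n))).Connected}
      = ↑(univ.filter (fun S : Finset (Fin n) =>
          S.card = 3 ∧ (G.induce (S : Set (Fin n))).Connected)) := by
    ext S; simp
  rw [subtreeCount, hset, Set.ncard_coe_finset]
  have key : (univ.sigma (fun v : Fin n => (G.neighborFinset v).powersetCard 2)).card
      = (univ.filter (fun S : Finset (Fin n) =>
          S.card = 3 ∧ (G.induce (S : Set (Fin n))).Connected)).card := by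
    apply Finset.card_bij (fun p _ => insert p.1 p.2)
    · rintro ⟨v, P⟩ hp
      simp only [Finset.mem_sigma, Finset.mem_univ, true_and, Finset.mem_powersetCard] at hp
      obtain ⟨hPsub, hP2⟩ := hp
      obtain ⟨a, b, hab, rfl⟩ := Finset.card_eq_two.mp hP2
      have hva : G.Adj v a := by
        have := hPsub (by simp : a ∈ ({a, b} : Finset (Fin n)))
        rwa [SimpleGraph.mem_neighborFinset] at this
      have hvb : G.Adj v b := by
        have := hPsub (by simp : b ∈ ({a, b} : Finset (Fin n)))
        rwa [SimpleGraph.mem_neighborFinset] at this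
      simp only [Finset.mem_filter, Finset.mem_univ, true_and]
      constructor
      · rw [Finset.card_insert_of_notMem (by simp [hva.ne, hvb.ne])]
        simp [hab]
      · exact center_connected hva hvb hab
    · rintro ⟨v, P⟩ hp ⟨v', P'⟩ hp' heq
      simp only [Finset.mem_sigma, Finset.mem_univ, true_and, Finset.mem_powersetCard]
        at hp hp'
      obtain ⟨hPsub, hP2⟩ := hp
      obtain ⟨hPsub', hP2'⟩ := hp'
      have hadj : ∀ x ∈ P, G.Adj v x := fun x hx =>
        (SimpleGraph.mem_neighborFinset _ _ _).mp (hPsub hx)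
      have hadj' : ∀ x ∈ P', G.Adj v' x := fun x hx =>
        (SimpleGraph.mem_neighborFinset _ _ _).mp (hPsub' hx)
      have hvP : v ∉ P := fun h => (G.irrefl (hadj v h)).elim
      have hvP' : v' ∉ P' := fun h => (G.irrefl (hadj' v' h)).elim
      simp only at heq
      have hvv' : v = v' := by
        by_contra hne
        have hv'P : v' ∈ P := by
          have : v' ∈ insert v P := heq ▸ Finset.mem_insert_self v' P'
          exact (Finset.mem_insert.mp this).resolve_left (fun h => hne h.symm)
        obtain ⟨t, ht⟩ : (P.erase v').Nonempty := by
          apply Finset.card_pos.mp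
          have := Finset.card_erase_of_mem hv'P
          omega
        have htP : t ∈ P := Finset.mem_of_mem_erase ht
        have htv' : t ≠ v' := Finset.ne_of_mem_erase ht
        have htv : t ≠ v := fun h => hvP (h ▸ htP)
        have htP' : t ∈ P' := by
          have : t ∈ insert v' P' := heq ▸ Finset.mem_insert_of_mem htP
          exact (Finset.mem_insert.mp this).resolve_left htv'
        exact (acyclic_no_triangle hac (hadj v' hv'P) (hadj' t htP')
          ((hadj t htP).symm)).elim
      subst hvv'
      have hPP' : P = P' := by
        rw [← Finset.erase_insert hvP, ← Finset.erase_insert hvP', heq]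
      subst hPP'
      rfl
    · intro S hS
      simp only [Finset.mem_filter, Finset.mem_univ, true_and] at hS
      obtain ⟨hcard, hconn⟩ := hS
      obtain ⟨v, hv, a, ha, b, hb, hab, hva, hvb⟩ := exists_center hcard hconn
      refine ⟨⟨v, {a, b}⟩, ?_, ?_⟩
      · simp only [Finset.mem_sigma, Finset.mem_univ, true_and, Finset.mem_powersetCard]
        constructor
        · intro x hx
          rcases Finset.mem_insert.mp hx with rfl | hx
          · exact (SimpleGraph.mem_neighborFinset _ _ _).mpr hva
          · rw [Finset.mem_singleton] at hx
            subst hx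
            exact (SimpleGraph.mem_neighborFinset _ _ _).mpr hvb
        · rw [Finset.card_insert_of_notMem (by simp [hab]), Finset.card_singleton]
      · simp only
        apply Finset.eq_of_subset_of_card_le
        · intro x hx
          rcases Finset.mem_insert.mp hx with rfl | hx
          · exact hv
          · rcases Finset.mem_insert.mp hx with rfl | hx
            · exact ha
            · rw [Finset.mem_singleton] at hx; subst hx; exact hb
        · rw [hcard]
          rw [Finset.card_insert_of_notMem (by simp [hva.ne, hvb.ne]),
            Finset.card_insert_of_notMem (by simp [hab]), Finset.card_singleton]
  rw [← key, Finset.card_sigma]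
  apply Finset.sum_congr rfl
  intro v _
  rw [Finset.card_powersetCard, hdeg v]
  rfl

lemma degree_facts {n : ℕ} (hn : 2 ≤ n) {G : SimpleGraph (Fin n)} (hG : IsTreeMaxDeg3 G) :
    ∑ v : Fin n, ((G.neighborSet v).ncard).choose 2
      = (n - 2) + {v : Fin n | (G.neighborSet v).ncard = 3}.ncard
    ∧ {v : Fin n | (G.neighborSet v).ncard = 3}.ncard ≤ (n - 2) / 2 := by
  classical
  obtain ⟨hconn, hac, hmax⟩ := hG
  have hdeg : ∀ v, (G.neighborSet v).ncard = G.degree v := by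
    intro v
    rw [Set.ncard_eq_toFinset_card']
    rfl
  have hdegpos : ∀ v, 1 ≤ G.degree v := by
    intro v
    set u : Fin n := ⟨if v.val = 0 then 1 else 0, by split <;> omega⟩ with hu
    have hne : u ≠ v := by
      intro h
      rw [Fin.ext_iff] at h
      simp only [hu] at h
      split at h <;> omega
    clear_value u
    obtain ⟨w⟩ := hconn.preconnected v u
    cases w with
    | nil => exact absurd rfl (Ne.symm hne)
    | cons h _ =>
      rw [Nat.succ_le_iff, G.degree_pos_iff_exists_adj]
      exact ⟨_, h⟩
  have hdegle : ∀ v, G.degree v ≤ 3 := fun v => (hdeg v) ▸ hmax v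
  have htree : G.IsTree := G.isTree_iff.mpr ⟨hconn, hac⟩
  have hedge : G.edgeFinset.card + 1 = n := by
    simpa using htree.card_edgeFinset
  have hsum : ∑ v : Fin n, G.degree v = 2 * (n - 1) := by
    rw [G.sum_degrees_eq_twice_card_edges]
    omega
  have hsplit : ∑ v : Fin n, (G.degree v).choose 2
      = ∑ v : Fin n, ((G.degree v - 1) + if G.degree v = 3 then 1 else 0) := by
    apply Finset.sum_congr rfl
    intro v _
    have h1 := hdegpos v
    have h3 := hdegle v
    have : G.degree v = 1 ∨ G.degree v = 2 ∨ G.degree v = 3 := by omega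
    rcases this with h | h | h <;> simp [h]
  have hsub : ∑ v : Fin n, (G.degree v - 1) = n - 2 := by
    have : ∑ v : Fin n, G.degree v = ∑ v : Fin n, ((G.degree v - 1) + 1) := by
      apply Finset.sum_congr rfl
      intro v _
      have := hdegpos v
      omega
    rw [hsum] at this
    rw [Finset.sum_add_distrib, Finset.sum_const, Finset.card_univ, Fintype.card_fin, smul_eq_mul, mul_one] at this
    omega
  have hn3 : {v : Fin n | (G.neighborSet v).ncard = 3}.ncard
      = (univ.filter (fun v => G.degree v = 3)).card := by
    rw [show {v : Fin n | (G.neighborSet v).ncard = 3}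
        = ↑(univ.filter (fun v => G.degree v = 3)) by ext v; simp [hdeg]]
    exact Set.ncard_coe_finset _
  have hite : ∑ v : Fin n, (if G.degree v = 3 then 1 else 0)
      = (univ.filter (fun v => G.degree v = 3)).card := by
    simp [Finset.sum_boole]
  constructor
  · calc ∑ v : Fin n, ((G.neighborSet v).ncard).choose 2
        = ∑ v : Fin n, (G.degree v).choose 2 := by
          apply Finset.sum_congr rfl; intro v _; rw [hdeg]
      _ = (n - 2) + {v : Fin n | (G.neighborSet v).ncard = 3}.ncard := by
          rw [hsplit, Finset.sum_add_distrib, hsub, hite, hn3]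
  · rw [hn3]
    have h2 : 2 * (univ.filter (fun v => G.degree v = 3)).card
        ≤ ∑ v : Fin n, (G.degree v - 1) := by
      calc 2 * (univ.filter (fun v => G.degree v = 3)).card
          = ∑ v ∈ univ.filter (fun v => G.degree v = 3), (G.degree v - 1) := by
            rw [Finset.sum_congr rfl (fun v hv => by
              simp only [Finset.mem_filter] at hv
              rw [hv.2])]
            simp [mul_comm]
        _ ≤ ∑ v : Fin n, (G.degree v - 1) :=
            Finset.sum_le_sum_of_subset (Finset.filter_subset _ _)
    rw [hsub] at h2
    omega

def cat (n : ℕ) : SimpleGraph (Fin n) where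
  Adj a b := a ≠ b ∧ ((a : ℕ) = (b : ℕ) / 2 ∨ (b : ℕ) = (a : ℕ) / 2)
  symm := by
    constructor
    rintro a b ⟨h1, h2⟩
    exact ⟨h1.symm, h2.symm⟩
  loopless := ⟨fun a h => h.1 rfl⟩

lemma cat_adj {n : ℕ} {a b : Fin n} :
    (cat n).Adj a b ↔ a ≠ b ∧ ((a : ℕ) = (b : ℕ) / 2 ∨ (b : ℕ) = (a : ℕ) / 2) := Iff.rfl

instance {n : ℕ} : DecidableRel (cat n).Adj := fun _ _ => instDecidableAnd

lemma cat_connected {n : ℕ} (hn : 2 ≤ n) : (cat n).Connected := by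
  have h0 : (0 : ℕ) < n := by omega
  have key : ∀ k (hk : k < n), (cat n).Reachable ⟨k, hk⟩ ⟨0, h0⟩ := by
    intro k
    induction k using Nat.strong_induction_on with
    | _ k ih =>
      intro hk
      rcases Nat.eq_zero_or_pos k with rfl | hkpos
      · rfl
      · have hdiv : k / 2 < k := Nat.div_lt_self hkpos one_lt_two
        have hadj : (cat n).Adj ⟨k, hk⟩ ⟨k / 2, by omega⟩ := by
          rw [cat_adj]
          refine ⟨?_, Or.inr rfl⟩
          rw [Fin.ne_iff_vne]
          simp only
          omega
        exact hadj.reachable.trans (ih (k / 2) hdiv (by omega))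
  haveI : Nonempty (Fin n) := ⟨⟨0, h0⟩⟩
  exact ⟨fun u w => (key u.val u.isLt).trans (key w.val w.isLt).symm⟩

lemma cat_acyclic {n : ℕ} : (cat n).IsAcyclic := by
  intro v c hc
  have hvmem : v ∈ c.support := Walk.start_mem_support c
  have hne : c.support.toFinset.Nonempty := ⟨v, by simpa using hvmem⟩
  set M := c.support.toFinset.max' hne with hM
  have hMmem : M ∈ c.support := by
    have := c.support.toFinset.max'_mem hne
    simpa using this
  have hle : ∀ x ∈ c.support, x ≤ M := fun x hx =>
    c.support.toFinset.le_max' x (by simpa using hx)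
  set c' := c.rotate M hMmem with hc'def
  have hc' : c'.IsCycle := hc.rotate hMmem
  have hsupp : ∀ x ∈ c'.support, x ≤ M := by
    intro x hx
    rw [Walk.support_eq_cons, List.mem_cons] at hx
    rcases hx with rfl | hx
    · exact le_refl _
    · have := (Walk.support_rotate c M hMmem).mem_iff.mp hx
      exact hle x (List.mem_of_mem_tail this)
  clear_value c'
  cases c' with
  | nil => exact Walk.IsCycle.not_of_nil hc'
  | @cons _ u _ h p =>
    have hcons := (Walk.cons_isCycle_iff p h).mp hc'
    have humem : u ∈ p.support := Walk.start_mem_support p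
    have huM : u ≤ M := hsupp u (by simp [Walk.support_cons, humem])
    have huneM : u ≠ M := h.ne'
    have huval : (u : ℕ) < (M : ℕ) := by
      rcases lt_or_eq_of_le huM with h' | h'
      · exact h'
      · exact absurd h' huneM
    have hu2 : (u : ℕ) = (M : ℕ) / 2 := by
      rcases (cat_adj.mp h).2 with h' | h'
      · omega
      · omega
    have hlast : ∃ w, (cat n).Adj M w ∧ w ∈ p.support ∧ s(M, w) ∈ p.edges := by
      have hqs := Walk.support_reverse p
      have hqe := Walk.edges_reverse p
      set q := p.reverse with hqdef
      clear_value q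
      cases q with
      | nil => exact absurd rfl huneM
      | @cons _ w _ h' r =>
        refine ⟨w, h', ?_, ?_⟩
        · have hws : w ∈ (Walk.cons h' r).support := by simp [Walk.support_cons]
          rw [hqs, List.mem_reverse] at hws
          exact hws
        · have hws : s(M, w) ∈ (Walk.cons h' r).edges := by simp [Walk.edges_cons]
          rw [hqe, List.mem_reverse] at hws
          exact hws
    obtain ⟨w, h', hwmem, hme⟩ := hlast
    have hwM : w ≤ M := hsupp w (by simp [Walk.support_cons, hwmem])
    have hwneM : w ≠ M := h'.ne'
    have hwval : (w : ℕ) < (M : ℕ) := by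
      rcases lt_or_eq_of_le hwM with h'' | h''
      · exact h''
      · exact absurd h'' hwneM
    have hw2 : (w : ℕ) = (M : ℕ) / 2 := by
      rcases (cat_adj.mp h').2 with h'' | h''
      · omega
      · omega
    have hwu : w = u := by
      rw [Fin.ext_iff, hw2, hu2]
    subst hwu
    exact hcons.2 hme

lemma card_filter_fin {n : ℕ} (p : ℕ → Prop) [DecidablePred p] :
    ((univ : Finset (Fin n)).filter (fun v => p v.val)).card
      = ((Finset.range n).filter p).card := by
  apply Finset.card_bij (fun v _ => v.val)
  · intro v hv
    simp only [Finset.mem_filter, Finset.mem_univ, true_and] at hv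
    simp [Finset.mem_filter, Finset.mem_range, v.isLt, hv]
  · intro a _ b _ h
    exact Fin.val_injective h
  · intro a ha
    simp only [Finset.mem_filter, Finset.mem_range] at ha
    exact ⟨⟨a, ha.1⟩, by simp [ha.2], rfl⟩

lemma cat_degree_aux {n : ℕ} (v : Fin n) :
    (cat n).degree v = ((Finset.range n).filter
      (fun w => v.val ≠ w ∧ ((v : ℕ) = w / 2 ∨ w = (v : ℕ) / 2))).card := by
  rw [SimpleGraph.degree, neighborFinset_eq_filter]
  rw [show (univ.filter ((cat n).Adj v))
      = univ.filter (fun w : Fin n =>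
          v.val ≠ w.val ∧ ((v : ℕ) = w.val / 2 ∨ w.val = (v : ℕ) / 2)) from by
    apply Finset.filter_congr
    intro w _
    rw [cat_adj, Fin.ne_iff_vne]]
  exact card_filter_fin (fun w => v.val ≠ w ∧ ((v : ℕ) = w / 2 ∨ w = (v : ℕ) / 2))

lemma cat_degree {n : ℕ} (hn : 2 ≤ n) (v : Fin n) :
    (cat n).degree v = if v.val = 0 then 1
      else if 2 * v.val + 1 < n then 3 else if 2 * v.val < n then 2 else 1 := by
  have hvn := v.isLt
  rw [cat_degree_aux]
  by_cases h0 : v.val = 0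
  · rw [if_pos h0]
    rw [show ((Finset.range n).filter
        (fun w => v.val ≠ w ∧ ((v : ℕ) = w / 2 ∨ w = (v : ℕ) / 2))) = {1} from by
      ext w
      simp only [Finset.mem_filter, Finset.mem_range, Finset.mem_singleton, h0]
      omega]
    rfl
  · rw [if_neg h0]
    by_cases hA : 2 * v.val + 1 < n
    · rw [if_pos hA]
      rw [show ((Finset.range n).filter
          (fun w => v.val ≠ w ∧ ((v : ℕ) = w / 2 ∨ w = (v : ℕ) / 2)))
          = {(v : ℕ) / 2, 2 * v.val, 2 * v.val + 1} from by
        ext w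
        simp only [Finset.mem_filter, Finset.mem_range, Finset.mem_insert,
          Finset.mem_singleton]
        omega]
      rw [Finset.card_insert_of_notMem (by
          simp only [Finset.mem_insert, Finset.mem_singleton]; omega),
        Finset.card_insert_of_notMem (by simp only [Finset.mem_singleton]; omega),
        Finset.card_singleton]
    · rw [if_neg hA]
      by_cases hB : 2 * v.val < n
      · rw [if_pos hB]
        rw [show ((Finset.range n).filter
            (fun w => v.val ≠ w ∧ ((v : ℕ) = w / 2 ∨ w = (v : ℕ) / 2)))
            = {(v : ℕ) / 2, 2 * v.val} from by
          ext w
          simp only [Finset.mem_filter, Finset.mem_range, Finset.mem_insert,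
            Finset.mem_singleton]
          omega]
        rw [Finset.card_insert_of_notMem (by simp only [Finset.mem_singleton]; omega),
          Finset.card_singleton]
      · rw [if_neg hB]
        rw [show ((Finset.range n).filter
            (fun w => v.val ≠ w ∧ ((v : ℕ) = w / 2 ∨ w = (v : ℕ) / 2)))
            = {(v : ℕ) / 2} from by
          ext w
          simp only [Finset.mem_filter, Finset.mem_range, Finset.mem_singleton]
          omega]
        rfl

lemma cat_hdeg {n : ℕ} (v : Fin n) :
    ((cat n).neighborSet v).ncard = (cat n).degree v := by
  rw [Set.ncard_eq_toFinset_card']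
  rfl

lemma cat_n3 {n : ℕ} (hn : 2 ≤ n) :
    {v : Fin n | ((cat n).neighborSet v).ncard = 3}.ncard = (n - 2) / 2 := by
  rw [show {v : Fin n | ((cat n).neighborSet v).ncard = 3}
      = ↑(univ.filter (fun v : Fin n => ¬ v.val = 0 ∧ 2 * v.val + 1 < n)) from by
    ext v
    simp only [Set.mem_setOf_eq, Finset.coe_filter, Finset.mem_univ, true_and,
      cat_hdeg, cat_degree hn v]
    split_ifs <;> omega]
  rw [Set.ncard_coe_finset, card_filter_fin (fun w => ¬ w = 0 ∧ 2 * w + 1 < n)]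
  rw [show (Finset.range n).filter (fun w => ¬ w = 0 ∧ 2 * w + 1 < n)
      = Finset.Ico 1 ((n - 2) / 2 + 1) from by
    ext w
    simp only [Finset.mem_filter, Finset.mem_range, Finset.mem_Ico]
    omega]
  rw [Nat.card_Ico]
  omega

lemma cat_isTreeMaxDeg3 {n : ℕ} (hn : 2 ≤ n) : 
    (cat n).Connected ∧ (cat n).IsAcyclic ∧ ∀ v, ((cat n).neighborSet v).ncard ≤ 3 := by
  refine ⟨cat_connected hn, cat_acyclic, fun v => ?_⟩
  rw [cat_hdeg, cat_degree hn v]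
  split_ifs <;> omega

/-- For `n ≥ 2`, the maximum number of 3-vertex subtrees of a tree on `n` vertices with
maximum degree at most 3 is `⌊(3n-6)/2⌋`, and every such tree having exactly
`⌊(n-2)/2⌋` vertices of degree 3 attains the maximum. -/

theorem maxSubtrees_three (n : ℕ) (hn : 2 ≤ n) :
    maxSubtrees n 3 = (3 * n - 6) / 2 ∧
    ∀ G : SimpleGraph (Fin n), IsTreeMaxDeg3 G →
      {v : Fin n | (G.neighborSet v).ncard = 3}.ncard = (n - 2) / 2 →
      subtreeCount G 3 = (3 * n - 6) / 2 := by
  have hformula : ∀ G : SimpleGraph (Fin n), IsTreeMaxDeg3 G →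
      subtreeCount G 3 = (n - 2) + {v : Fin n | (G.neighborSet v).ncard = 3}.ncard := by
    intro G hG
    rw [count_eq_sum hG.2.1, (degree_facts hn hG).1]
  have hbound : ∀ G : SimpleGraph (Fin n), IsTreeMaxDeg3 G →
      subtreeCount G 3 ≤ (3 * n - 6) / 2 := by
    intro G hG
    rw [hformula G hG]
    have := (degree_facts hn hG).2
    omega
  have hsecond : ∀ G : SimpleGraph (Fin n), IsTreeMaxDeg3 G →
      {v : Fin n | (G.neighborSet v).ncard = 3}.ncard = (n - 2) / 2 →
      subtreeCount G 3 = (3 * n - 6) / 2 := by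
    intro G hG h3
    rw [hformula G hG, h3]
    omega
  have hcat : IsTreeMaxDeg3 (cat n) := cat_isTreeMaxDeg3 hn
  have hcatval : subtreeCount (cat n) 3 = (3 * n - 6) / 2 := hsecond _ hcat (cat_n3 hn)
  refine ⟨?_, hsecond⟩
  have hne : {m | ∃ G : SimpleGraph (Fin n), IsTreeMaxDeg3 G ∧ subtreeCount G 3 = m}.Nonempty :=
    ⟨subtreeCount (cat n) 3, cat n, hcat, rfl⟩
  have hub : (3 * n - 6) / 2 ∈
      upperBounds {m | ∃ G : SimpleGraph (Fin n), IsTreeMaxDeg3 G ∧ subtreeCount G 3 = m} := by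
    rintro m ⟨G, hG, rfl⟩
    exact hbound G hG
  unfold maxSubtrees
  exact le_antisymm (csSup_le hne hub) (le_csSup ⟨_, hub⟩ ⟨cat n, hcat, hcatval⟩)
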